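/- For nonzero real numbers k and c, the mean curvature H of the surface p_{k,c}(x,y) = (x, y, c e^{kx} cos ky), computed with respect to the unit normal n = (p_x × p_y)/‖p_x × p_y‖, is given at every point (x,y) ∈ ℝ² by H = − c³ k⁴ e^{3kx} cos ky / ( 2 (1 + c² k² e^{2kx})^{3/2} ). -/

import Mathlib

noncomputable section

/-- Cross product on ℝ³ represented as `ℝ × ℝ × ℝ`. -/
def cross3 (u v : ℝ × ℝ × ℝ) : ℝ × ℝ × ℝ :=
  (u.2.1 * v.2.2 - u.2.2 * v.2.1,
   u.2.2 * v.1 - u.1 * v.2.2,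
   u.1 * v.2.1 - u.2.1 * v.1)

/-- Dot product on ℝ³. -/
def dot3 (u v : ℝ × ℝ × ℝ) : ℝ :=
  u.1 * v.1 + u.2.1 * v.2.1 + u.2.2 * v.2.2

/-- Euclidean norm on ℝ³. -/
def norm3 (u : ℝ × ℝ × ℝ) : ℝ := Real.sqrt (dot3 u u)

lemma d_x (c k y : ℝ) (s : ℝ) :
    deriv (fun s' : ℝ => ((s' : ℝ), y, c * Real.exp (k * s') * Real.cos (k * y))) s
      = (1, 0, c * k * Real.exp (k * s) * Real.cos (k * y)) := by
  have h3 : HasDerivAt (fun s' : ℝ => c * Real.exp (k * s') * Real.cos (k * y))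
      (c * k * Real.exp (k * s) * Real.cos (k * y)) s := by
    have h := ((((hasDerivAt_id s).const_mul k).exp.const_mul c).mul_const (Real.cos (k*y)))
    refine h.congr_deriv ?_
    simp only [id_eq]; ring
  exact (HasDerivAt.prodMk (hasDerivAt_id s) (HasDerivAt.prodMk (hasDerivAt_const s y) h3)).deriv

lemma d_y (c k x : ℝ) (t : ℝ) :
    deriv (fun t' : ℝ => ((x : ℝ), t', c * Real.exp (k * x) * Real.cos (k * t'))) t
      = (0, 1, -(c * k * Real.exp (k * x) * Real.sin (k * t))) := by
  have h3 : HasDerivAt (fun t' : ℝ => c * Real.exp (k * x) * Real.cos (k * t'))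
      (-(c * k * Real.exp (k * x) * Real.sin (k * t))) t := by
    have h := (((hasDerivAt_id t).const_mul k).cos.const_mul (c * Real.exp (k * x)))
    refine h.congr_deriv ?_
    simp only [id_eq]; ring
  exact (HasDerivAt.prodMk (hasDerivAt_const t x) (HasDerivAt.prodMk (hasDerivAt_id t) h3)).deriv

lemma d_xx (c k y : ℝ) (x : ℝ) :
    deriv (fun s : ℝ => ((1:ℝ), (0:ℝ), c * k * Real.exp (k * s) * Real.cos (k * y))) x
      = (0, 0, c * k ^ 2 * Real.exp (k * x) * Real.cos (k * y)) := by
  have h3 : HasDerivAt (fun s : ℝ => c * k * Real.exp (k * s) * Real.cos (k * y))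
      (c * k ^ 2 * Real.exp (k * x) * Real.cos (k * y)) x := by
    have h := ((((hasDerivAt_id x).const_mul k).exp.const_mul (c * k)).mul_const (Real.cos (k*y)))
    refine h.congr_deriv ?_
    simp only [id_eq]; ring
  exact (HasDerivAt.prodMk (hasDerivAt_const x (1:ℝ)) (HasDerivAt.prodMk (hasDerivAt_const x (0:ℝ)) h3)).deriv

lemma d_xy (c k x : ℝ) (y : ℝ) :
    deriv (fun t : ℝ => ((1:ℝ), (0:ℝ), c * k * Real.exp (k * x) * Real.cos (k * t))) y
      = (0, 0, -(c * k ^ 2 * Real.exp (k * x) * Real.sin (k * y))) := by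
  have h3 : HasDerivAt (fun t : ℝ => c * k * Real.exp (k * x) * Real.cos (k * t))
      (-(c * k ^ 2 * Real.exp (k * x) * Real.sin (k * y))) y := by
    have h := (((hasDerivAt_id y).const_mul k).cos.const_mul (c * k * Real.exp (k * x)))
    refine h.congr_deriv ?_
    simp only [id_eq]; ring
  exact (HasDerivAt.prodMk (hasDerivAt_const y (1:ℝ)) (HasDerivAt.prodMk (hasDerivAt_const y (0:ℝ)) h3)).deriv

lemma d_yy (c k x : ℝ) (y : ℝ) :
    deriv (fun t : ℝ => ((0:ℝ), (1:ℝ), -(c * k * Real.exp (k * x) * Real.sin (k * t)))) y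
      = (0, 0, -(c * k ^ 2 * Real.exp (k * x) * Real.cos (k * y))) := by
  have h3 : HasDerivAt (fun t : ℝ => -(c * k * Real.exp (k * x) * Real.sin (k * t)))
      (-(c * k ^ 2 * Real.exp (k * x) * Real.cos (k * y))) y := by
    have h := ((((hasDerivAt_id y).const_mul k).sin.const_mul (c * k * Real.exp (k * x)))).neg
    refine h.congr_deriv ?_
    simp only [id_eq]; ring
  exact (HasDerivAt.prodMk (hasDerivAt_const y (0:ℝ)) (HasDerivAt.prodMk (hasDerivAt_const y (1:ℝ)) h3)).deriv
/-- For nonzero `k, c`, the mean curvature of `p_{k,c}(x,y) = (x, y, c e^{kx} cos ky)`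
with respect to `n = (p_x × p_y)/‖p_x × p_y‖` is
`H = − c³ k⁴ e^{3kx} cos ky / (2 (1 + c² k² e^{2kx})^{3/2})`. -/
theorem stmt_14 (k c : ℝ) (hk : k ≠ 0) (hc : c ≠ 0) :
    ∀ x y : ℝ,
      let p : ℝ → ℝ → ℝ × ℝ × ℝ :=
        fun s t => (s, t, c * Real.exp (k * s) * Real.cos (k * t))
      let px := deriv (fun s => p s y) x
      let py := deriv (fun t => p x t) y
      let pxx := deriv (fun s => deriv (fun s' => p s' y) s) x
      let pxy := deriv (fun t => deriv (fun s => p s t) x) y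
      let pyy := deriv (fun t => deriv (fun t' => p x t') t) y
      let n := (norm3 (cross3 px py))⁻¹ • cross3 px py
      let E := dot3 px px
      let Ft := dot3 px py
      let G := dot3 py py
      let e := dot3 pxx n
      let f := dot3 pxy n
      let g := dot3 pyy n
      let H := (e * G - 2 * f * Ft + g * E) / (2 * (E * G - Ft ^ 2))
      H = -(c ^ 3 * k ^ 4 * Real.exp (3 * k * x) * Real.cos (k * y)) /
        (2 * (1 + c ^ 2 * k ^ 2 * Real.exp (2 * k * x)) ^ ((3 : ℝ) / 2)) := by
  intro x y
  dsimp only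
  simp only [d_x, d_y, d_xx, d_xy, d_yy]
  simp only [cross3, dot3, norm3, Prod.smul_fst, Prod.smul_snd, smul_eq_mul]
  have hco : Real.sin (k*y)^2 + Real.cos (k*y)^2 = 1 := Real.sin_sq_add_cos_sq _
  set A := Real.exp (k * x) with hA
  have hA0 : (0:ℝ) < A := Real.exp_pos _
  have hQ : (0:ℝ) < 1 + c ^ 2 * k ^ 2 * A ^ 2 := by positivity
  have harg : (0 * -(c * k * A * Real.sin (k * y)) - c * k * A * Real.cos (k * y) * 1) *
          (0 * -(c * k * A * Real.sin (k * y)) - c * k * A * Real.cos (k * y) * 1) +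
        (c * k * A * Real.cos (k * y) * 0 - 1 * -(c * k * A * Real.sin (k * y))) *
          (c * k * A * Real.cos (k * y) * 0 - 1 * -(c * k * A * Real.sin (k * y))) +
      (1 * 1 - 0 * 0) * (1 * 1 - 0 * 0) = 1 + c ^ 2 * k ^ 2 * A ^ 2 := by
    linear_combination (c ^ 2 * k ^ 2 * A ^ 2) * hco
  rw [harg]
  set S := Real.sqrt (1 + c ^ 2 * k ^ 2 * A ^ 2) with hSdef
  have hS0 : (0:ℝ) < S := Real.sqrt_pos.2 hQ
  have hSS : S * S = 1 + c ^ 2 * k ^ 2 * A ^ 2 := Real.mul_self_sqrt hQ.le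
  have h3 : Real.exp (3 * k * x) = A ^ 3 := by
    rw [show (3:ℝ) * k * x = k*x + (k*x + k*x) by ring, Real.exp_add, Real.exp_add, ← hA]; ring
  have h2 : Real.exp (2 * k * x) = A ^ 2 := by
    rw [show (2:ℝ) * k * x = k*x + k*x by ring, Real.exp_add, ← hA]; ring
  have hrpow : (1 + c ^ 2 * k ^ 2 * A ^ 2 : ℝ) ^ ((3:ℝ)/2) = (1 + c ^ 2 * k ^ 2 * A ^ 2) * S := by
    rw [show (3:ℝ)/2 = 1 + 1/2 by norm_num, Real.rpow_add hQ, Real.rpow_one, hSdef,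
      Real.sqrt_eq_rpow]
  rw [h3, h2, hrpow]
  have hn : ((0 * (S⁻¹ * (0 * -(c * k * A * Real.sin (k * y)) - c * k * A * Real.cos (k * y) * 1)) +
                0 * (S⁻¹ * (c * k * A * Real.cos (k * y) * 0 - 1 * -(c * k * A * Real.sin (k * y)))) +
              c * k ^ 2 * A * Real.cos (k * y) * (S⁻¹ * (1 * 1 - 0 * 0))) *
            (0 * 0 + 1 * 1 + -(c * k * A * Real.sin (k * y)) * -(c * k * A * Real.sin (k * y))) -
          2 *
              (0 * (S⁻¹ * (0 * -(c * k * A * Real.sin (k * y)) - c * k * A * Real.cos (k * y) * 1)) +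
                  0 * (S⁻¹ * (c * k * A * Real.cos (k * y) * 0 - 1 * -(c * k * A * Real.sin (k * y)))) +
                -(c * k ^ 2 * A * Real.sin (k * y)) * (S⁻¹ * (1 * 1 - 0 * 0))) *
            (1 * 0 + 0 * 1 + c * k * A * Real.cos (k * y) * -(c * k * A * Real.sin (k * y))) +
        (0 * (S⁻¹ * (0 * -(c * k * A * Real.sin (k * y)) - c * k * A * Real.cos (k * y) * 1)) +
              0 * (S⁻¹ * (c * k * A * Real.cos (k * y) * 0 - 1 * -(c * k * A * Real.sin (k * y)))) +
            -(c * k ^ 2 * A * Real.cos (k * y)) * (S⁻¹ * (1 * 1 - 0 * 0))) *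
          (1 * 1 + 0 * 0 + c * k * A * Real.cos (k * y) * (c * k * A * Real.cos (k * y))))
      = -(c ^ 3 * k ^ 4 * A ^ 3 * Real.cos (k * y)) * S⁻¹ := by
    linear_combination (-(c ^ 3 * k ^ 4 * A ^ 3 * Real.cos (k * y)) * S⁻¹) * hco
  have hd : ((1 * 1 + 0 * 0 + c * k * A * Real.cos (k * y) * (c * k * A * Real.cos (k * y))) *
            (0 * 0 + 1 * 1 + -(c * k * A * Real.sin (k * y)) * -(c * k * A * Real.sin (k * y))) -
          (1 * 0 + 0 * 1 + c * k * A * Real.cos (k * y) * -(c * k * A * Real.sin (k * y))) ^ 2)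
      = 1 + c ^ 2 * k ^ 2 * A ^ 2 := by
    linear_combination (c ^ 2 * k ^ 2 * A ^ 2) * hco
  rw [hn, hd]
  rw [div_eq_div_iff (by positivity) (by positivity)]
  have hinv : S⁻¹ * S = 1 := inv_mul_cancel₀ hS0.ne'
  linear_combination (-(c ^ 3 * k ^ 4 * A ^ 3 * Real.cos (k * y)) *
    (2 * (1 + c ^ 2 * k ^ 2 * A ^ 2))) * hinv
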